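/- arXiv:2008.08007 — 3 statements merged into one kernel-verified Lean document; each statement's English description precedes it below -/
import Mathlib

section
/- Let L be a lattice in ℝ^d (the set of integer combinations of a linearly independent family of vectors) and let v ∈ L be a nonzero lattice vector. Then there exists a Voronoi relevant vector v* of L (i.e., a vector v* ∈ L such that the halfspace {y : ‖y‖ ≤ ‖v* − y‖} defines a facet of the Voronoi cell of L) with ‖v − v*‖ < ‖v‖. In particular, taking η ∈ (0,1/2] maximal with η·v in the Voronoi cell 𝒱(L) = {y : ‖y‖ ≤ ‖w − y‖ for all nonzero w ∈ L}, the point η·v lies on the facet corresponding to some v* ∈ L, and for this v* one has ‖v − v*‖ < ‖v‖. -/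
open Submodule Metric RealInnerProductSpace

lemma lattice_inter_ball_finite' {d m : ℕ}
    (b : Fin m → EuclideanSpace ℝ (Fin d)) (hb : LinearIndependent ℝ b)
    (L : Set (EuclideanSpace ℝ (Fin d)))
    (hL : L = {x | ∃ a : Fin m → ℤ, x = ∑ i, (a i : ℝ) • b i}) (r : ℝ) :
    (L ∩ closedBall 0 r).Finite := by
  have hb' : LinearIndepOn ℝ id (Set.range b) :=
    hb.linearIndepOn_id
  let cb := Module.Basis.extend hb'
  haveI : Fintype ↥(hb'.extend (Set.subset_univ _)) := FiniteDimensional.fintypeBasisIndex cb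
  set Λ : Submodule ℤ (EuclideanSpace ℝ (Fin d)) := span ℤ (Set.range ⇑cb) with hΛ
  haveI : DiscreteTopology Λ.toAddSubgroup :=
    inferInstanceAs <| DiscreteTopology (span ℤ (Set.range ⇑cb))
  have hclosed : IsClosed (Λ : Set (EuclideanSpace ℝ (Fin d))) :=
    AddSubgroup.isClosed_of_discrete (H := Λ.toAddSubgroup)
  have hcompact : IsCompact ((Λ : Set (EuclideanSpace ℝ (Fin d))) ∩ closedBall 0 r) :=
    (isCompact_closedBall _ _).inter_left hclosed
  haveI : DiscreteTopology ((Λ : Set (EuclideanSpace ℝ (Fin d))) : Set _).Elem :=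
    inferInstanceAs <| DiscreteTopology Λ
  have hfin : ((Λ : Set (EuclideanSpace ℝ (Fin d))) ∩ closedBall 0 r).Finite :=
    hcompact.finite (isDiscrete_iff_discreteTopology.mpr (DiscreteTopology.of_subset this Set.inter_subset_left))
  refine hfin.subset (Set.inter_subset_inter_left _ ?_)
  rintro x hx
  rw [hL] at hx
  obtain ⟨a, rfl⟩ := hx
  refine Submodule.sum_mem _ fun i _ => ?_
  rw [Int.cast_smul_eq_zsmul]
  refine Submodule.smul_mem _ (a i) (Submodule.subset_span ?_)
  rw [Module.Basis.range_extend]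
  exact Module.Basis.subset_extend hb' ⟨i, rfl⟩

lemma norm_le_iff_inner' {d : ℕ} (w y : EuclideanSpace ℝ (Fin d)) :
    ‖y‖ ≤ ‖w - y‖ ↔ 2 * ⟪w, y⟫ ≤ ‖w‖ ^ 2 := by
  have h := norm_sub_sq_real w y
  constructor
  · intro h1
    nlinarith [norm_nonneg y, norm_nonneg (w - y)]
  · intro h1
    by_contra hc
    push_neg at hc
    nlinarith [norm_nonneg (w - y)]

lemma norm_eq_iff_inner' {d : ℕ} (w y : EuclideanSpace ℝ (Fin d)) :
    ‖y‖ = ‖w - y‖ ↔ 2 * ⟪w, y⟫ = ‖w‖ ^ 2 := by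
  have h := norm_sub_sq_real w y
  constructor
  · intro h1
    have h2 : ‖y‖ ^ 2 = ‖w - y‖ ^ 2 := by rw [h1]
    linarith
  · intro h1
    have h2 : ‖y‖ ^ 2 = ‖w - y‖ ^ 2 := by linarith
    have := congrArg Real.sqrt h2
    rwa [Real.sqrt_sq (norm_nonneg y), Real.sqrt_sq (norm_nonneg (w - y))] at this



/-- The Voronoi cell of a lattice `L ⊆ ℝ^d`: points at least as close to `0`
as to any nonzero lattice vector. -/
def VoronoiCell {d : ℕ} (L : Set (EuclideanSpace ℝ (Fin d))) :
    Set (EuclideanSpace ℝ (Fin d)) :=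
  {y | ∀ w ∈ L, w ≠ 0 → ‖y‖ ≤ ‖w - y‖}

/-- A nonzero lattice vector `w ∈ L` is Voronoi relevant if the hyperplane
`{y : ‖y‖ = ‖w − y‖}` supports a facet of the Voronoi cell, i.e. the contact set
of the Voronoi cell with this hyperplane affinely spans the whole hyperplane. -/
def IsVoronoiRelevant {d : ℕ} (L : Set (EuclideanSpace ℝ (Fin d)))
    (w : EuclideanSpace ℝ (Fin d)) : Prop :=
  w ∈ L ∧ w ≠ 0 ∧
    affineSpan ℝ {y | y ∈ VoronoiCell L ∧ ‖y‖ = ‖w - y‖}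
      = affineSpan ℝ {y : EuclideanSpace ℝ (Fin d) | ‖y‖ = ‖w - y‖}

set_option maxHeartbeats 1000000 in
/-- For any nonzero vector `v` of a lattice `L` (the integer combinations of a
linearly independent family), there is a Voronoi relevant vector `v*` of `L`
with `‖v − v*‖ < ‖v‖`. -/
theorem exists_voronoiRelevant_closer {d m : ℕ}
    (b : Fin m → EuclideanSpace ℝ (Fin d)) (hb : LinearIndependent ℝ b)
    (L : Set (EuclideanSpace ℝ (Fin d)))
    (hL : L = {x | ∃ a : Fin m → ℤ, x = ∑ i, (a i : ℝ) • b i})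
    (v : EuclideanSpace ℝ (Fin d)) (hv : v ∈ L) (hv0 : v ≠ 0) :
    ∃ vstar ∈ L, IsVoronoiRelevant L vstar ∧ ‖v - vstar‖ < ‖v‖ := by
  classical
  have hfin : ∀ r : ℝ, (L ∩ closedBall 0 r).Finite :=
    lattice_inter_ball_finite' b hb L hL
  have hsub : ∀ x ∈ L, ∀ y ∈ L, x - y ∈ L := by
    rw [hL]
    rintro x ⟨a, rfl⟩ y ⟨c, rfl⟩
    refine ⟨a - c, ?_⟩
    rw [← Finset.sum_sub_distrib]
    refine Finset.sum_congr rfl fun i _ => ?_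
    rw [← sub_smul, Pi.sub_apply]
    push_cast
    ring_nf
  -- the set S of candidates
  set S : Set (EuclideanSpace ℝ (Fin d)) :=
    {u | u ∈ L ∧ u ≠ 0 ∧ ‖u‖ ^ 2 ≤ ⟪v, u⟫} with hSdef
  have hSfin : S.Finite := by
    refine (hfin ‖v‖).subset ?_
    rintro u ⟨h1, h2, h3⟩
    refine ⟨h1, ?_⟩
    rw [mem_closedBall_zero_iff]
    have hcs : ⟪v, u⟫ ≤ ‖v‖ * ‖u‖ := real_inner_le_norm v u
    have hu : (0 : ℝ) < ‖u‖ := norm_pos_iff.mpr h2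
    nlinarith
  have hSne : S.Nonempty := ⟨v, hv, hv0, by rw [real_inner_self_eq_norm_sq]⟩
  obtain ⟨w, hwS, hwmin⟩ := Set.exists_min_image S norm hSfin hSne
  obtain ⟨hwL, hw0, hwv⟩ := hwS
  have hw_norm_pos : (0 : ℝ) < ‖w‖ := norm_pos_iff.mpr hw0
  -- strict Voronoi property of w
  have hstrict : ∀ u ∈ L, u ≠ 0 → u ≠ w → ⟪u, w⟫ < ‖u‖ ^ 2 := by
    intro u huL hu0 huw
    by_contra hcon
    push_neg at hcon
    have hu_pos : (0 : ℝ) < ‖u‖ := norm_pos_iff.mpr hu0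
    have hcs : ⟪u, w⟫ ≤ ‖u‖ * ‖w‖ := real_inner_le_norm u w
    have huw_norm : ‖u‖ < ‖w‖ := by
      rcases lt_or_ge ‖u‖ ‖w‖ with h | h
      · exact h
      · exfalso
        apply huw
        have h3 : ‖u‖ = ‖w‖ := le_antisymm (by nlinarith) h
        have h4 : ‖u - w‖ ^ 2 ≤ 0 := by nlinarith [norm_sub_sq_real u w]
        have h5 : ‖u - w‖ = 0 := by nlinarith [norm_nonneg (u - w)]
        exact sub_eq_zero.mp (norm_eq_zero.mp h5)
    have hw'L : w - u ∈ L := hsub w hwL u huL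
    have hw'0 : w - u ≠ 0 := sub_ne_zero.mpr (Ne.symm huw)
    have hw'norm : ‖w - u‖ ^ 2 ≤ ‖w‖ ^ 2 - ‖u‖ ^ 2 := by
      nlinarith [norm_sub_sq_real w u, real_inner_comm u w]
    have hw'lt : ‖w - u‖ < ‖w‖ := by
      nlinarith [norm_nonneg (w - u)]
    have h5 : ⟪v, w - u⟫ < ‖w - u‖ ^ 2 := by
      by_contra h
      push_neg at h
      exact absurd (hwmin _ ⟨hw'L, hw'0, h⟩) (not_le.mpr hw'lt)
    have h6 : ‖u‖ ^ 2 ≤ ⟪v, u⟫ := by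
      have hvu : ⟪v, u⟫ = ⟪v, w⟫ - ⟪v, w - u⟫ := by
        rw [inner_sub_right]; ring
      nlinarith
    exact absurd (hwmin u ⟨huL, hu0, h6⟩) (not_le.mpr huw_norm)
  -- the center of the facet
  set c : EuclideanSpace ℝ (Fin d) := (2 : ℝ)⁻¹ • w with hcdef
  have hwc : w - c = c := by rw [hcdef]; module
  have hcH : ‖c‖ = ‖w - c‖ := by rw [hwc]
  have hinner_wc : 2 * ⟪w, c⟫ = ‖w‖ ^ 2 := (norm_eq_iff_inner' w c).mp hcH
  have hc_norm : ‖c‖ = ‖w‖ / 2 := by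
    rw [hcdef, norm_smul]
    simp [norm_inv]
    ring
  -- finite set of nearby constraints
  set F : Set (EuclideanSpace ℝ (Fin d)) :=
    {u | (u ∈ L ∧ u ≠ 0 ∧ u ≠ w)} ∩ closedBall 0 (‖w‖ + 2) with hFdef
  have hFfin : F.Finite := (hfin (‖w‖ + 2)).subset
    (Set.inter_subset_inter_left _ (fun u hu => hu.1))
  -- the margin function
  set g : EuclideanSpace ℝ (Fin d) → ℝ := fun u => (‖u‖ ^ 2 - ⟪u, w⟫) / (2 * ‖u‖) with hgdef
  set T : Finset ℝ := insert (1 : ℝ) (hFfin.toFinset.image g) with hTdef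
  have hTne : T.Nonempty := ⟨1, Finset.mem_insert_self _ _⟩
  set ε : ℝ := T.min' hTne with hεdef
  have hε1 : ε ≤ 1 := Finset.min'_le _ _ (Finset.mem_insert_self _ _)
  have hεg : ∀ u ∈ F, ε ≤ g u := fun u hu =>
    Finset.min'_le _ _ (Finset.mem_insert_of_mem
      (Finset.mem_image_of_mem g (hFfin.mem_toFinset.mpr hu)))
  have hεpos : 0 < ε := by
    rw [hεdef]
    rw [Finset.lt_min'_iff]
    intro y hy
    rcases Finset.mem_insert.mp hy with rfl | hy
    · norm_num
    · obtain ⟨u, hu, rfl⟩ := Finset.mem_image.mp hy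
      have hu' := hFfin.mem_toFinset.mp hu
      obtain ⟨⟨huL, hu0, huw⟩, _⟩ := hu'
      have h1 : ⟪u, w⟫ < ‖u‖ ^ 2 := hstrict u huL hu0 huw
      have h2 : (0 : ℝ) < ‖u‖ := norm_pos_iff.mpr hu0
      exact div_pos (by linarith) (by positivity)
  -- points of the hyperplane near c are in the Voronoi cell
  have hball : ∀ y : EuclideanSpace ℝ (Fin d), ‖y‖ = ‖w - y‖ → ‖y - c‖ ≤ ε →
      y ∈ VoronoiCell L := by
    intro y hyH hyc u huL hu0
    rw [norm_le_iff_inner' u y]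
    have hyw : 2 * ⟪w, y⟫ = ‖w‖ ^ 2 := (norm_eq_iff_inner' w y).mp hyH
    by_cases hu : u = w
    · subst hu; linarith
    have hu_pos : (0 : ℝ) < ‖u‖ := norm_pos_iff.mpr hu0
    have h1 : ⟪u, y⟫ = ⟪u, c⟫ + ⟪u, y - c⟫ := by rw [inner_sub_right]; ring
    have h2 : ⟪u, y - c⟫ ≤ ‖u‖ * ‖y - c‖ := real_inner_le_norm _ _
    have h3 : ‖u‖ * ‖y - c‖ ≤ ‖u‖ * ε := mul_le_mul_of_nonneg_left hyc (norm_nonneg u)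
    by_cases hub : ‖u‖ ≤ ‖w‖ + 2
    · -- nearby constraint, use the margin
      have huF : u ∈ F := ⟨⟨huL, hu0, hu⟩, by rwa [mem_closedBall_zero_iff]⟩
      have hg := hεg u huF
      have hgu : ‖u‖ * g u = (‖u‖ ^ 2 - ⟪u, w⟫) / 2 := by
        rw [hgdef]
        field_simp
      have h4 : ‖u‖ * ε ≤ (‖u‖ ^ 2 - ⟪u, w⟫) / 2 := by
        rw [← hgu]
        exact mul_le_mul_of_nonneg_left hg (norm_nonneg u)
      have h5 : 2 * ⟪u, c⟫ = ⟪u, w⟫ := by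
        rw [hcdef, real_inner_smul_right]; ring
      linarith
    · -- far away constraint
      push_neg at hub
      have h4 : ⟪u, y⟫ ≤ ‖u‖ * ‖y‖ := real_inner_le_norm u y
      have h5 : ‖y‖ ≤ ‖c‖ + ε := by
        calc ‖y‖ = ‖(y - c) + c‖ := by rw [sub_add_cancel]
        _ ≤ ‖y - c‖ + ‖c‖ := norm_add_le _ _
        _ ≤ ε + ‖c‖ := by linarith
        _ = ‖c‖ + ε := by ring
      nlinarith
  -- c itself is in the Voronoi cell
  have hcC : c ∈ VoronoiCell L := hball c hcH (by simp [hεpos.le])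
  refine ⟨w, hwL, ⟨hwL, hw0, ?_⟩, ?_⟩
  · -- affine span equality
    apply le_antisymm
    · exact affineSpan_mono ℝ (fun y hy => hy.2)
    · rw [affineSpan_le]
      intro y hyH
      simp only [Set.mem_setOf_eq] at hyH
      by_cases hyc : y = c
      · subst hyc
        exact subset_affineSpan ℝ _ ⟨hcC, hcH⟩
      · have hr : (0 : ℝ) < ‖y - c‖ := norm_pos_iff.mpr (sub_ne_zero.mpr hyc)
        set t : ℝ := ε / ‖y - c‖ with htdef
        have ht : 0 < t := div_pos hεpos hr
        set z : EuclideanSpace ℝ (Fin d) := c + t • (y - c) with hzdef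
        have hyw : 2 * ⟪w, y⟫ = ‖w‖ ^ 2 := (norm_eq_iff_inner' w y).mp hyH
        have hzH : ‖z‖ = ‖w - z‖ := by
          rw [norm_eq_iff_inner' w z]
          have hwz : ⟪w, z⟫ = ⟪w, c⟫ + t * (⟪w, y⟫ - ⟪w, c⟫) := by
            rw [hzdef]
            simp only [inner_add_right, inner_sub_right, real_inner_smul_right]
            try ring
          have hwy_eq : ⟪w, y⟫ = ⟪w, c⟫ := by linarith
          rw [hwz, hwy_eq, sub_self, mul_zero, add_zero]
          exact hinner_wc
        have hzc : ‖z - c‖ ≤ ε := by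
          have hzc' : z - c = t • (y - c) := by rw [hzdef]; abel
          rw [hzc', norm_smul, Real.norm_of_nonneg ht.le, htdef,
            div_mul_cancel₀ _ hr.ne']
        have hzC : z ∈ VoronoiCell L := hball z hzH hzc
        have key := (affineSpan ℝ {y | y ∈ VoronoiCell L ∧ ‖y‖ = ‖w - y‖}).smul_vsub_vadd_mem
          (1 / t) (subset_affineSpan ℝ _ ⟨hzC, hzH⟩)
          (subset_affineSpan ℝ _ ⟨hcC, hcH⟩) (subset_affineSpan ℝ _ ⟨hcC, hcH⟩)
        have hyz : (1 / t) • (z -ᵥ c) +ᵥ c = y := by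
          rw [vsub_eq_sub, vadd_eq_add, hzdef]
          rw [add_sub_cancel_left, smul_smul, one_div, inv_mul_cancel₀ ht.ne', one_smul]
          abel
        rwa [hyz] at key
  · -- the distance bound
    have h1 : ‖v - w‖ ^ 2 < ‖v‖ ^ 2 := by
      nlinarith [norm_sub_sq_real v w]
    by_contra hc
    push_neg at hc
    nlinarith [norm_nonneg (v - w), norm_nonneg v]
end

section
/- Let P be a finite probability distribution on a set U ∪ {⊥} with P(u) ∝ e^{(ε/2)·s(u)} for a score function s : U ∪ {⊥} → ℝ, where s(⊥) = s⊥ is fixed. Let opt = max_{u ∈ U} s(u), and suppose opt > t where t = s⊥ + (2/ε)·ln(2|U|/β). Let U_good = {u ∈ U : s(u) ≥ opt − t}. Then P(not U_good) ≤ e^{(ε/2)(s⊥ − opt)} + |U|·e^{−(ε/2)t} ≤ β. -/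
open Classical in
/-- Accuracy of the exponential mechanism over `U ∪ {⊥}`: the probability mass
of elements with score below `opt − t` (together with `⊥`) is at most
`e^{(ε/2)(s⊥ − opt)} + |U|·e^{−(ε/2)t}`, which is at most `β`, where
`t = s⊥ + (2/ε)·ln(2|U|/β)` and `opt > t`. -/
theorem exponential_mechanism_accuracy {U : Type*} [Fintype U] [Nonempty U]
    (ε β : ℝ) (hε : 0 < ε) (hβ0 : 0 < β) (hβ1 : β < 1)
    (s : U → ℝ) (sbot : ℝ) (hsbot : 0 ≤ sbot)
    (opt : ℝ) (hopt : IsGreatest (Set.range s) opt)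
    (t : ℝ) (ht : t = sbot + (2 / ε) * Real.log (2 * (Fintype.card U) / β))
    (hoptt : t < opt) :
    (Real.exp ((ε / 2) * sbot)
        + ∑ u ∈ Finset.univ.filter (fun u => s u < opt - t), Real.exp ((ε / 2) * s u))
        / ((∑ u : U, Real.exp ((ε / 2) * s u)) + Real.exp ((ε / 2) * sbot))
      ≤ Real.exp ((ε / 2) * (sbot - opt)) + (Fintype.card U) * Real.exp (-(ε / 2) * t) ∧
    Real.exp ((ε / 2) * (sbot - opt)) + (Fintype.card U) * Real.exp (-(ε / 2) * t) ≤ β := by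
  have hεne : ε ≠ 0 := ne_of_gt hε
  set N : ℝ := (Fintype.card U : ℝ) with hNdef
  have hN1 : (1:ℝ) ≤ N := by
    rw [hNdef]
    exact_mod_cast Nat.one_le_iff_ne_zero.mpr (Fintype.card_ne_zero (α := U))
  have hNpos : (0:ℝ) < N := lt_of_lt_of_le one_pos hN1
  have hlogarg : (0:ℝ) < 2 * N / β := by positivity
  have hkey : (ε/2) * (sbot - t) = - Real.log (2*N/β) := by
    rw [ht]; field_simp; ring
  have hexp_t : Real.exp ((ε/2)*(sbot - t)) = β/(2*N) := by
    rw [hkey, Real.exp_neg, Real.exp_log hlogarg, inv_div]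
  -- part 2
  have hterm1 : Real.exp ((ε / 2) * (sbot - opt)) ≤ β / (2 * N) := by
    rw [← hexp_t]
    apply Real.exp_le_exp.mpr
    have : sbot - opt ≤ sbot - t := by linarith
    nlinarith
  have hterm2 : N * Real.exp (-(ε / 2) * t) ≤ β / 2 := by
    have h1 : Real.exp (-(ε/2) * t) ≤ β/(2*N) := by
      rw [← hexp_t]
      apply Real.exp_le_exp.mpr
      nlinarith
    calc N * Real.exp (-(ε/2) * t) ≤ N * (β/(2*N)) := by
          exact mul_le_mul_of_nonneg_left h1 (le_of_lt hNpos)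
      _ = β / 2 := by field_simp
  have part2 : Real.exp ((ε / 2) * (sbot - opt)) + N * Real.exp (-(ε / 2) * t) ≤ β := by
    have hb2 : β / (2 * N) ≤ β / 2 := by
      apply div_le_div_of_nonneg_left (le_of_lt hβ0) two_pos
      linarith
    linarith
  refine ⟨?_, part2⟩
  -- part 1
  obtain ⟨u0, hu0⟩ := hopt.1
  set E : ℝ := Real.exp ((ε/2) * opt) with hE
  have hEpos : 0 < E := Real.exp_pos _
  have hsumE : E ≤ ∑ u : U, Real.exp ((ε / 2) * s u) := by
    have := Finset.single_le_sum (f := fun u => Real.exp ((ε/2) * s u))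
      (fun u _ => (Real.exp_pos _).le) (Finset.mem_univ u0)
    simpa only [hu0] using this
  have hZ : E ≤ (∑ u : U, Real.exp ((ε / 2) * s u)) + Real.exp ((ε / 2) * sbot) := by
    have := (Real.exp_pos ((ε/2) * sbot)).le
    linarith
  have hnum_nonneg : 0 ≤ Real.exp ((ε / 2) * sbot)
      + ∑ u ∈ Finset.univ.filter (fun u => s u < opt - t), Real.exp ((ε / 2) * s u) := by
    have : 0 ≤ ∑ u ∈ Finset.univ.filter (fun u => s u < opt - t),
        Real.exp ((ε / 2) * s u) :=
      Finset.sum_nonneg (fun u _ => (Real.exp_pos _).le)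
    positivity
  have hsum_bound : ∑ u ∈ Finset.univ.filter (fun u => s u < opt - t),
      Real.exp ((ε / 2) * s u) ≤ N * Real.exp ((ε/2) * (opt - t)) := by
    calc ∑ u ∈ Finset.univ.filter (fun u => s u < opt - t), Real.exp ((ε / 2) * s u)
        ≤ ∑ _u ∈ Finset.univ.filter (fun u => s u < opt - t),
            Real.exp ((ε/2) * (opt - t)) := by
          apply Finset.sum_le_sum
          intro u hu
          have hu' := (Finset.mem_filter.mp hu).2
          apply Real.exp_le_exp.mpr
          nlinarith
      _ = ((Finset.univ.filter (fun u => s u < opt - t)).card : ℝ)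
            * Real.exp ((ε/2) * (opt - t)) := by
          rw [Finset.sum_const, nsmul_eq_mul]
      _ ≤ N * Real.exp ((ε/2) * (opt - t)) := by
          apply mul_le_mul_of_nonneg_right _ (Real.exp_pos _).le
          rw [hNdef]
          exact_mod_cast Finset.card_filter_le _ _
  calc (Real.exp ((ε / 2) * sbot)
        + ∑ u ∈ Finset.univ.filter (fun u => s u < opt - t), Real.exp ((ε / 2) * s u))
        / ((∑ u : U, Real.exp ((ε / 2) * s u)) + Real.exp ((ε / 2) * sbot))
      ≤ (Real.exp ((ε / 2) * sbot)
        + ∑ u ∈ Finset.univ.filter (fun u => s u < opt - t), Real.exp ((ε / 2) * s u)) / E := by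
        apply div_le_div_of_nonneg_left hnum_nonneg hEpos hZ
    _ ≤ (Real.exp ((ε / 2) * sbot) + N * Real.exp ((ε/2) * (opt - t))) / E := by
        gcongr
    _ = Real.exp ((ε / 2) * (sbot - opt)) + N * Real.exp (-(ε / 2) * t) := by
        rw [hE, add_div, ← Real.exp_sub, mul_div_assoc, ← Real.exp_sub]
        ring_nf
end

section
/- Let X and X' be finite multisets of points in the unit ball of ℝ^d with the following property: there is a bijection between X and X' pairing each x with x' such that ‖x − x'‖ ≤ η(x) for nonnegative values η(x). Then for every tuple of centers (c_1,…,c_k) in ℝ^d, the (k,p)-clustering cost satisfies cost_X'^p(c_1,…,c_k) ≤ (1+γ)·cost_X^p(c_1,…,c_k) + λ_{p,γ}·Σ_x η(x)^p, where cost_X^p(c_1,…,c_k) = Σ_{x ∈ X} (min_j ‖x − c_j‖)^p and λ_{p,γ} = (1+γ)/((1+γ)^{1/p} − 1)^p. -/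
lemma key_power_sum (p γ a b : ℝ) (hp : 1 ≤ p) (hγ : 0 < γ) (ha : 0 ≤ a) (hb : 0 ≤ b) :
    (a + b) ^ p ≤ (1 + γ) * a ^ p + ((1 + γ) / ((1 + γ) ^ (1 / p) - 1) ^ p) * b ^ p := by
  have hp0 : 0 < p := lt_of_lt_of_le one_pos hp
  have h1γ : (1:ℝ) < 1 + γ := by linarith
  set t := (1 + γ) ^ (1 / p) with htdef
  have ht : 1 < t := (Real.one_lt_rpow_iff_of_pos (by linarith)).mpr (Or.inl ⟨h1γ, by positivity⟩)
  have ht0 : 0 < t := lt_trans one_pos ht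
  have ht1 : 0 < t - 1 := by linarith
  have htp : t ^ p = 1 + γ := by
    rw [htdef, ← Real.rpow_mul (by linarith : (0:ℝ) ≤ 1 + γ),
      one_div_mul_cancel (ne_of_gt hp0), Real.rpow_one]
  have hlam : 0 ≤ (1 + γ) / (t - 1) ^ p := by positivity
  rcases le_or_gt b ((t - 1) * a) with h | h
  · have hab : a + b ≤ t * a := by nlinarith
    have h1 : (a + b) ^ p ≤ (t * a) ^ p :=
      Real.rpow_le_rpow (by linarith) hab hp0.le
    have h2 : (t * a) ^ p = (1 + γ) * a ^ p := by
      rw [Real.mul_rpow ht0.le ha, htp]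
    have h3 : 0 ≤ ((1 + γ) / (t - 1) ^ p) * b ^ p := by positivity
    calc (a + b) ^ p ≤ (1 + γ) * a ^ p := by rw [← h2]; exact h1
      _ ≤ _ := by linarith
  · have hab : a + b ≤ (t / (t - 1)) * b := by
      rw [div_mul_eq_mul_div, le_div_iff₀ ht1]
      nlinarith
    have h1 : (a + b) ^ p ≤ ((t / (t - 1)) * b) ^ p :=
      Real.rpow_le_rpow (by linarith) hab hp0.le
    have h2 : ((t / (t - 1)) * b) ^ p = ((1 + γ) / (t - 1) ^ p) * b ^ p := by
      rw [Real.mul_rpow (by positivity) hb, Real.div_rpow ht0.le ht1.le, htp]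
    have h3 : 0 ≤ (1 + γ) * a ^ p := by positivity
    calc (a + b) ^ p ≤ ((1 + γ) / (t - 1) ^ p) * b ^ p := by rw [← h2]; exact h1
      _ ≤ _ := by linarith

/-- Snapping argument: if two families of points in the unit ball are paired so
that `‖x_i − x'_i‖ ≤ η_i`, then for every tuple of `k` centers, the clustering
cost of the snapped points is at most `(1+γ)` times the original cost plus
`λ_{p,γ}·Σ_i η_i^p`, where `λ_{p,γ} = (1+γ)/((1+γ)^{1/p} − 1)^p`. -/
theorem snapped_points_coreset {d m k : ℕ} (hk : 0 < k)
    (p γ : ℝ) (hp : 1 ≤ p) (hγ : 0 < γ)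
    (x x' : Fin m → EuclideanSpace ℝ (Fin d))
    (hx : ∀ i, ‖x i‖ ≤ 1) (hx' : ∀ i, ‖x' i‖ ≤ 1)
    (η : Fin m → ℝ) (hη : ∀ i, 0 ≤ η i)
    (hclose : ∀ i, dist (x i) (x' i) ≤ η i) :
    ∀ c : Fin k → EuclideanSpace ℝ (Fin d),
      ∑ i, (⨅ j, dist (x' i) (c j)) ^ p
        ≤ (1 + γ) * ∑ i, (⨅ j, dist (x i) (c j)) ^ p
          + ((1 + γ) / ((1 + γ) ^ (1 / p) - 1) ^ p) * ∑ i, η i ^ p := by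
  intro c
  haveI : Nonempty (Fin k) := Fin.pos_iff_nonempty.mp hk
  have key : ∀ i, (⨅ j, dist (x' i) (c j)) ^ p
      ≤ (1 + γ) * (⨅ j, dist (x i) (c j)) ^ p
        + ((1 + γ) / ((1 + γ) ^ (1 / p) - 1) ^ p) * η i ^ p := by
    intro i
    have hbd : BddBelow (Set.range fun j => dist (x i) (c j)) :=
      ⟨0, by rintro r ⟨j, rfl⟩; exact dist_nonneg⟩
    have hA : (⨅ j, dist (x' i) (c j)) ≤ (⨅ j, dist (x i) (c j)) + η i := by
      rw [ciInf_add hbd]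
      refine ciInf_mono ⟨0, by rintro r ⟨j, rfl⟩; exact dist_nonneg⟩ (fun j => ?_)
      calc dist (x' i) (c j) ≤ dist (x' i) (x i) + dist (x i) (c j) := dist_triangle _ _ _
        _ ≤ dist (x i) (c j) + η i := by rw [dist_comm]; linarith [hclose i]
    have h0' : 0 ≤ ⨅ j, dist (x' i) (c j) := Real.iInf_nonneg fun j => dist_nonneg
    have h0 : 0 ≤ ⨅ j, dist (x i) (c j) := Real.iInf_nonneg fun j => dist_nonneg
    calc (⨅ j, dist (x' i) (c j)) ^ p ≤ ((⨅ j, dist (x i) (c j)) + η i) ^ p :=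
          Real.rpow_le_rpow h0' hA (lt_of_lt_of_le one_pos hp).le
      _ ≤ _ := key_power_sum p γ _ _ hp hγ h0 (hη i)
  calc ∑ i, (⨅ j, dist (x' i) (c j)) ^ p
      ≤ ∑ i, ((1 + γ) * (⨅ j, dist (x i) (c j)) ^ p
          + ((1 + γ) / ((1 + γ) ^ (1 / p) - 1) ^ p) * η i ^ p) :=
        Finset.sum_le_sum fun i _ => key i
    _ = _ := by rw [Finset.sum_add_distrib, ← Finset.mul_sum, ← Finset.mul_sum]
end
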